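/- Let 0 < t < 1 and let Ω ⊆ ℝ^N be an open set. Suppose u ∈ W^{t,q}(Ω) for every 1 ≤ q < ∞ and L := liminf_{q→∞} [u]_{W^{t,q}(Ω)} < +∞. Then u agrees almost everywhere with a function ũ satisfying [ũ]_{C^{0,t}(Ω)} ≤ L. -/

import Mathlib

open MeasureTheory ENNReal Filter Metric Set

noncomputable section

abbrev Euc (N : ℕ) := EuclideanSpace ℝ (Fin N)

/-- Homogeneous Hölder seminorm `[u]_{C^{0,α}(Ω)}`, `ℝ≥0∞`-valued. -/
noncomputable def holderSemi {N : ℕ} (Ω : Set (Euc N)) (α : ℝ) (u : Euc N → ℝ) : ℝ≥0∞ :=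
  ⨆ (x : Ω) (y : Ω) (_ : x.1 ≠ y.1),
    ENNReal.ofReal (|u x.1 - u y.1| / ‖x.1 - y.1‖ ^ α)

/-- `p`-th power of the Gagliardo seminorm `[u]_{W^{s,p}(Ω)}^p`. -/
noncomputable def gagliardoP {N : ℕ} (Ω : Set (Euc N)) (s p : ℝ) (u : Euc N → ℝ) : ℝ≥0∞ :=
  ∫⁻ x in Ω, ∫⁻ y in Ω,
    ENNReal.ofReal (|u x - u y| ^ p / ‖x - y‖ ^ ((N : ℝ) + s * p))

/-- Gagliardo seminorm `[u]_{W^{s,p}(Ω)}`. -/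
noncomputable def gagliardoSemi {N : ℕ} (Ω : Set (Euc N)) (s p : ℝ) (u : Euc N → ℝ) : ℝ≥0∞ :=
  gagliardoP Ω s p u ^ (1 / p)

section Aux
open Topology

lemma real_pointwise {a d D pw q : ℝ} (hq : 0 < q) (ha : 0 ≤ a) (hd : 0 ≤ d)
    (hdD : d ≤ D) (hpw : 0 ≤ pw) (h : d = 0 → a = 0) :
    a ^ q ≤ D ^ pw * (a ^ q / d ^ pw) := by
  have hD : 0 ≤ D := hd.trans hdD
  rcases eq_or_lt_of_le hd with hd0 | hd0
  · rw [h hd0.symm, Real.zero_rpow hq.ne']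
    positivity
  · have hdpw : 0 < d ^ pw := Real.rpow_pos_of_pos hd0 pw
    rw [mul_comm, div_mul_eq_mul_div, le_div_iff₀ hdpw]
    exact mul_le_mul_of_nonneg_left (Real.rpow_le_rpow hd hdD hpw) (by positivity)

lemma probSmul {N : ℕ} (x : Euc N) {r : ℝ} (hr : 0 < r) :
    IsProbabilityMeasure ((volume (closedBall x r))⁻¹ • volume.restrict (closedBall x r)) := by
  haveI : IsFiniteMeasure (volume.restrict (closedBall (α := Euc N) x r)) :=
    ⟨by rw [Measure.restrict_apply_univ]; exact measure_closedBall_lt_top⟩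
  haveI : NeZero (volume.restrict (closedBall (α := Euc N) x r)) :=
    ⟨by
      intro h
      have := measure_closedBall_pos volume x hr
      rw [← Measure.restrict_apply_univ, h] at this
      simp at this⟩
  have := MeasureTheory.isProbabilityMeasureSMul
    (μ := volume.restrict (closedBall (α := Euc N) x r))
  rwa [Measure.restrict_apply_univ] at this

lemma jensen_lintegral {α : Type*} [MeasurableSpace α] (μ : Measure α)
    [IsProbabilityMeasure μ] {q : ℝ} (hq : 1 < q) {g : α → ℝ≥0∞}
    (hg : AEMeasurable g μ) : ∫⁻ a, g a ∂μ ≤ (∫⁻ a, g a ^ q ∂μ) ^ (1/q) := by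
  have hpq : q.HolderConjugate (Real.conjExponent q) := Real.HolderConjugate.conjExponent hq
  have h := ENNReal.lintegral_mul_le_Lp_mul_Lq μ hpq hg aemeasurable_const (g := fun _ => 1)
  simpa using h

lemma double_jensen {α : Type*} [MeasurableSpace α] (μ₁ μ₂ : Measure α)
    [IsProbabilityMeasure μ₁] [IsProbabilityMeasure μ₂] [SFinite μ₂] {q : ℝ} (hq : 1 < q)
    {F : α × α → ℝ≥0∞} (hF : Measurable F) :
    ∫⁻ z, ∫⁻ w, F (z, w) ∂μ₂ ∂μ₁ ≤ (∫⁻ z, ∫⁻ w, F (z, w) ^ q ∂μ₂ ∂μ₁) ^ (1/q) := by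
  have hq0 : q ≠ 0 := by positivity
  have inner_le : ∀ z, ∫⁻ w, F (z, w) ∂μ₂ ≤ (∫⁻ w, F (z, w) ^ q ∂μ₂) ^ (1/q) := fun z =>
    jensen_lintegral μ₂ hq (Measurable.aemeasurable (by fun_prop))
  have outer_meas : Measurable fun z => ∫⁻ w, F (z, w) ^ q ∂μ₂ := by
    apply Measurable.lintegral_prod_right' (f := fun p => F p ^ q)
    fun_prop
  calc ∫⁻ z, ∫⁻ w, F (z, w) ∂μ₂ ∂μ₁
      ≤ ∫⁻ z, (∫⁻ w, F (z, w) ^ q ∂μ₂) ^ (1/q) ∂μ₁ := lintegral_mono inner_le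
    _ ≤ (∫⁻ z, ((∫⁻ w, F (z, w) ^ q ∂μ₂) ^ (1/q)) ^ q ∂μ₁) ^ (1/q) :=
        jensen_lintegral μ₁ hq ((outer_meas.pow_const _).aemeasurable)
    _ = (∫⁻ z, ∫⁻ w, F (z, w) ^ q ∂μ₂ ∂μ₁) ^ (1/q) := by
        congr 1
        refine lintegral_congr fun z => ?_
        rw [← ENNReal.rpow_mul, one_div, inv_mul_cancel₀ hq0, ENNReal.rpow_one]

lemma avg_diff_le {α : Type*} [MeasurableSpace α] {μ₁ μ₂ : Measure α}
    [IsProbabilityMeasure μ₁] [IsProbabilityMeasure μ₂]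
    {f : α → ℝ} (h₁ : Integrable f μ₁) (h₂ : Integrable f μ₂) :
    ENNReal.ofReal |(∫ z, f z ∂μ₁) - ∫ w, f w ∂μ₂| ≤
      ∫⁻ z, ∫⁻ w, ENNReal.ofReal |f z - f w| ∂μ₂ ∂μ₁ := by
  have key : ∀ (c : ℝ), ENNReal.ofReal |c - ∫ w, f w ∂μ₂| ≤
      ∫⁻ w, ENNReal.ofReal |c - f w| ∂μ₂ := by
    intro c
    have : c - ∫ w, f w ∂μ₂ = ∫ w, (c - f w) ∂μ₂ := by
      rw [integral_sub (integrable_const c) h₂, integral_const]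
      simp
    rw [this]
    calc ENNReal.ofReal |∫ w, (c - f w) ∂μ₂| = ↑‖∫ w, (c - f w) ∂μ₂‖₊ := by
          rw [← enorm_eq_nnnorm, ← ofReal_norm, Real.norm_eq_abs]
      _ ≤ ∫⁻ w, ↑‖c - f w‖₊ ∂μ₂ := enorm_integral_le_lintegral_enorm _
      _ = ∫⁻ w, ENNReal.ofReal |c - f w| ∂μ₂ := by
          simp_rw [← enorm_eq_nnnorm, ← ofReal_norm, Real.norm_eq_abs]
  have step1 : (∫ z, f z ∂μ₁) - ∫ w, f w ∂μ₂ = ∫ z, (f z - ∫ w, f w ∂μ₂) ∂μ₁ := by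
    rw [integral_sub h₁ (integrable_const _), integral_const]
    simp
  calc ENNReal.ofReal |(∫ z, f z ∂μ₁) - ∫ w, f w ∂μ₂|
      = ↑‖∫ z, (f z - ∫ w, f w ∂μ₂) ∂μ₁‖₊ := by
        rw [← step1, ← enorm_eq_nnnorm, ← ofReal_norm, Real.norm_eq_abs]
    _ ≤ ∫⁻ z, ↑‖f z - ∫ w, f w ∂μ₂‖₊ ∂μ₁ := enorm_integral_le_lintegral_enorm _
    _ = ∫⁻ z, ENNReal.ofReal |f z - ∫ w, f w ∂μ₂| ∂μ₁ := by
        simp_rw [← enorm_eq_nnnorm, ← ofReal_norm, Real.norm_eq_abs]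
    _ ≤ ∫⁻ z, ∫⁻ w, ENNReal.ofReal |f z - f w| ∂μ₂ ∂μ₁ := lintegral_mono fun z => key (f z)

lemma keyEstimate {N : ℕ} (Ω : Set (Euc N)) {t : ℝ} (ht0 : 0 < t) {f : Euc N → ℝ}
    (hf : Measurable f) (hint : IntegrableOn f Ω volume)
    {x y : Euc N} {r ρ q : ℝ} (hr : 0 < r) (hρ : 0 < ρ) (hq : 1 < q)
    (hB1 : closedBall x r ⊆ Ω) (hB2 : closedBall y ρ ⊆ Ω) :
    ENNReal.ofReal |(⨍ z in closedBall x r, f z) - ⨍ w in closedBall y ρ, f w| ≤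
      ((volume (closedBall x r))⁻¹ * (volume (closedBall y ρ))⁻¹ *
        ENNReal.ofReal ((dist x y + r + ρ) ^ ((N : ℝ) + t * q))) ^ (1/q) *
      (gagliardoP Ω t q f) ^ (1/q) := by
  have hq0 : 0 < q := lt_trans one_pos hq
  set B₁ := closedBall x r with hB₁def
  set B₂ := closedBall y ρ with hB₂def
  set V₁ := volume B₁ with hV₁def
  set V₂ := volume B₂ with hV₂def
  have hV₁0 : V₁ ≠ 0 := (measure_closedBall_pos volume x hr).ne'
  have hV₂0 : V₂ ≠ 0 := (measure_closedBall_pos volume y hρ).ne'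
  have hV₁top : V₁ ≠ ⊤ := measure_closedBall_lt_top.ne
  have hV₂top : V₂ ≠ ⊤ := measure_closedBall_lt_top.ne
  set μ₁ := V₁⁻¹ • volume.restrict B₁ with hμ₁def
  set μ₂ := V₂⁻¹ • volume.restrict B₂ with hμ₂def
  haveI : IsProbabilityMeasure μ₁ := probSmul x hr
  haveI : IsProbabilityMeasure μ₂ := probSmul y hρ
  set D := dist x y + r + ρ with hDdef
  have hD0 : 0 < D := by positivity
  set pw := (N : ℝ) + t * q with hpwdef
  have hpw0 : 0 ≤ pw := by positivity
  -- averages as integrals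
  have hA1 : (⨍ z in B₁, f z) = ∫ z, f z ∂μ₁ := by
    rw [average_eq', Measure.restrict_apply_univ]
  have hA2 : (⨍ w in B₂, f w) = ∫ w, f w ∂μ₂ := by
    rw [average_eq', Measure.restrict_apply_univ]
  have hint₁ : Integrable f μ₁ :=
    ((hint.mono_set hB1).smul_measure (ENNReal.inv_ne_top.2 hV₁0))
  have hint₂ : Integrable f μ₂ :=
    ((hint.mono_set hB2).smul_measure (ENNReal.inv_ne_top.2 hV₂0))
  -- step 1 + 2
  have step12 : ENNReal.ofReal |(⨍ z in B₁, f z) - ⨍ w in B₂, f w| ≤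
      (∫⁻ z, ∫⁻ w, ENNReal.ofReal |f z - f w| ^ q ∂μ₂ ∂μ₁) ^ (1/q) := by
    rw [hA1, hA2]
    refine le_trans (avg_diff_le hint₁ hint₂) ?_
    exact double_jensen μ₁ μ₂ hq (F := fun p => ENNReal.ofReal |f p.1 - f p.2|) (by fun_prop)
  -- step 3
  have pointwise : ∀ z ∈ B₁, ∀ w ∈ B₂, ENNReal.ofReal |f z - f w| ^ q ≤
      ENNReal.ofReal (D ^ pw) * ENNReal.ofReal (|f z - f w| ^ q / ‖z - w‖ ^ pw) := by
    intro z hz w hw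
    rw [ENNReal.ofReal_rpow_of_nonneg (abs_nonneg _) hq0.le,
      ← ENNReal.ofReal_mul (by positivity)]
    apply ENNReal.ofReal_le_ofReal
    refine real_pointwise hq0 (abs_nonneg _) (norm_nonneg _) ?_ hpw0 ?_
    · rw [← dist_eq_norm]
      calc dist z w ≤ dist z x + dist x y + dist y w := dist_triangle4 z x y w
        _ ≤ r + dist x y + ρ := by
            gcongr
            · exact mem_closedBall.1 hz
            · rw [dist_comm]; exact mem_closedBall.1 hw
        _ = D := by ring
    · intro h
      have : z = w := by
        rwa [norm_sub_eq_zero_iff] at h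
      simp [this]
  have e2 : (∫⁻ z in B₁, ∫⁻ w in B₂, ENNReal.ofReal |f z - f w| ^ q) ≤
      ENNReal.ofReal (D ^ pw) * gagliardoP Ω t q f := by
    calc (∫⁻ z in B₁, ∫⁻ w in B₂, ENNReal.ofReal |f z - f w| ^ q)
        ≤ ∫⁻ z in B₁, ∫⁻ w in B₂,
            ENNReal.ofReal (D ^ pw) * ENNReal.ofReal (|f z - f w| ^ q / ‖z - w‖ ^ pw) := by
          refine lintegral_mono_ae ?_
          filter_upwards [ae_restrict_mem measurableSet_closedBall] with z hz
          refine lintegral_mono_ae ?_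
          filter_upwards [ae_restrict_mem measurableSet_closedBall] with w hw
          exact pointwise z hz w hw
      _ = ENNReal.ofReal (D ^ pw) *
            ∫⁻ z in B₁, ∫⁻ w in B₂, ENNReal.ofReal (|f z - f w| ^ q / ‖z - w‖ ^ pw) := by
          simp_rw [lintegral_const_mul' (ENNReal.ofReal (D ^ pw)) _ ENNReal.ofReal_ne_top]
      _ ≤ ENNReal.ofReal (D ^ pw) * gagliardoP Ω t q f := by
          gcongr
          rw [gagliardoP]
          refine le_trans (lintegral_mono fun z => lintegral_mono_set hB2) ?_
          exact lintegral_mono_set hB1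
  -- assemble
  have e1 : (∫⁻ z, ∫⁻ w, ENNReal.ofReal |f z - f w| ^ q ∂μ₂ ∂μ₁) =
      V₁⁻¹ * (V₂⁻¹ * ∫⁻ z in B₁, ∫⁻ w in B₂, ENNReal.ofReal |f z - f w| ^ q) := by
    rw [hμ₁def, lintegral_smul_measure]
    congr 1
    simp_rw [hμ₂def, lintegral_smul_measure, smul_eq_mul]
    rw [lintegral_const_mul' _ _ (ENNReal.inv_ne_top.2 hV₂0)]
  refine le_trans step12 ?_
  rw [e1]
  calc (V₁⁻¹ * (V₂⁻¹ * ∫⁻ z in B₁, ∫⁻ w in B₂, ENNReal.ofReal |f z - f w| ^ q)) ^ (1/q)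
      ≤ (V₁⁻¹ * (V₂⁻¹ * (ENNReal.ofReal (D ^ pw) * gagliardoP Ω t q f))) ^ (1/q) := by
        gcongr
    _ = ((V₁⁻¹ * V₂⁻¹ * ENNReal.ofReal (D ^ pw)) * gagliardoP Ω t q f) ^ (1/q) := by
        ring_nf
    _ = (V₁⁻¹ * V₂⁻¹ * ENNReal.ofReal (D ^ pw)) ^ (1/q) * (gagliardoP Ω t q f) ^ (1/q) :=
        ENNReal.mul_rpow_of_nonneg _ _ (by positivity)
lemma tendsto_rpow_one_div {C : ℝ≥0∞} (hC0 : C ≠ 0) (hCt : C ≠ ⊤) :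
    Tendsto (fun q : ℝ => C ^ (1/q)) atTop (𝓝 1) := by
  obtain ⟨c, hc, rfl⟩ : ∃ c : ℝ, 0 < c ∧ ENNReal.ofReal c = C :=
    ⟨C.toReal, ENNReal.toReal_pos hC0 hCt, ENNReal.ofReal_toReal hCt⟩
  have h1 : Tendsto (fun q : ℝ => 1/q) atTop (𝓝 0) := by
    simpa [one_div] using (tendsto_inv_atTop_zero (𝕜 := ℝ))
  have h2 : Tendsto (fun q : ℝ => c ^ (1/q)) atTop (𝓝 1) := by
    have := (Real.continuousAt_const_rpow (a := c) (b := 0) hc.ne').tendsto.comp h1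
    simpa [Function.comp_def] using this
  have h3 := (ENNReal.continuous_ofReal.tendsto 1).comp h2
  rw [ENNReal.ofReal_one] at h3
  refine h3.congr fun q => ?_
  simp [Function.comp, ENNReal.ofReal_rpow_of_pos hc]

lemma avg_liminf {N : ℕ} (Ω : Set (Euc N)) {t : ℝ} (ht0 : 0 < t) {f : Euc N → ℝ}
    (hf : Measurable f) (hint : IntegrableOn f Ω volume)
    {x y : Euc N} {r ρ : ℝ} (hr : 0 < r) (hρ : 0 < ρ)
    (hB1 : closedBall x r ⊆ Ω) (hB2 : closedBall y ρ ⊆ Ω)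
    (hL : Filter.liminf (fun q : ℝ => gagliardoSemi Ω t q f) atTop ≠ ⊤) :
    ENNReal.ofReal |(⨍ z in closedBall x r, f z) - ⨍ w in closedBall y ρ, f w| ≤
      ENNReal.ofReal ((dist x y + r + ρ) ^ t) *
        Filter.liminf (fun q : ℝ => gagliardoSemi Ω t q f) atTop := by
  set v : ℝ → ℝ≥0∞ := fun q => gagliardoSemi Ω t q f with hvdef
  set D := dist x y + r + ρ with hDdef
  have hD0 : 0 < D := by positivity
  set V₁ := volume (closedBall x r) with hV₁def
  set V₂ := volume (closedBall y ρ) with hV₂def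
  have hV₁0 : V₁ ≠ 0 := (measure_closedBall_pos volume x hr).ne'
  have hV₂0 : V₂ ≠ 0 := (measure_closedBall_pos volume y hρ).ne'
  have hV₁top : V₁ ≠ ⊤ := measure_closedBall_lt_top.ne
  have hV₂top : V₂ ≠ ⊤ := measure_closedBall_lt_top.ne
  set C := V₁⁻¹ * V₂⁻¹ * ENNReal.ofReal (D ^ (N : ℝ)) with hCdef
  set u : ℝ → ℝ≥0∞ :=
    fun q => (V₁⁻¹ * V₂⁻¹ * ENNReal.ofReal (D ^ ((N : ℝ) + t * q))) ^ (1/q) with hudef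
  have hev : ∀ᶠ q in atTop,
      ENNReal.ofReal |(⨍ z in closedBall x r, f z) - ⨍ w in closedBall y ρ, f w| ≤
        (u * v) q := by
    filter_upwards [eventually_gt_atTop 1] with q hq
    exact keyEstimate Ω ht0 hf hint hr hρ hq hB1 hB2
  have hCongr : ∀ᶠ q in atTop, u q = C ^ (1/q) * ENNReal.ofReal (D ^ t) := by
    filter_upwards [eventually_gt_atTop 0] with q hq
    have hq0 : q ≠ 0 := hq.ne'
    have e : D ^ ((N : ℝ) + t * q) = D ^ (N : ℝ) * (D ^ t) ^ q := by
      rw [Real.rpow_add hD0, Real.rpow_mul hD0.le]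
    rw [hudef]
    simp only
    rw [e, ENNReal.ofReal_mul (by positivity),
      ← ENNReal.ofReal_rpow_of_pos (Real.rpow_pos_of_pos hD0 t), ← mul_assoc, ← hCdef,
      ENNReal.mul_rpow_of_nonneg _ _ (by positivity), ← ENNReal.rpow_mul,
      mul_one_div_cancel hq0, ENNReal.rpow_one]
  have hC0 : C ≠ 0 := by
    refine mul_ne_zero (mul_ne_zero ?_ ?_) ?_
    · exact ENNReal.inv_ne_zero.2 hV₁top
    · exact ENNReal.inv_ne_zero.2 hV₂top
    · simp only [ne_eq, ENNReal.ofReal_eq_zero, not_le]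
      positivity
  have hCtop : C ≠ ⊤ := by
    refine ENNReal.mul_ne_top (ENNReal.mul_ne_top ?_ ?_) ENNReal.ofReal_ne_top
    · exact ENNReal.inv_ne_top.2 hV₁0
    · exact ENNReal.inv_ne_top.2 hV₂0
  have hu : Tendsto u atTop (𝓝 (ENNReal.ofReal (D ^ t))) := by
    have h1 := ENNReal.Tendsto.mul_const (tendsto_rpow_one_div hC0 hCtop)
      (b := ENNReal.ofReal (D ^ t)) (Or.inl one_ne_zero)
    rw [one_mul] at h1
    exact Tendsto.congr' (hCongr.mono fun q hq => hq.symm) h1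
  have hlimsup : Filter.limsup u atTop = ENNReal.ofReal (D ^ t) := hu.limsup_eq
  have hle : ENNReal.ofReal |(⨍ z in closedBall x r, f z) - ⨍ w in closedBall y ρ, f w| ≤
      Filter.liminf (u * v) atTop := le_liminf_of_le (by isBoundedDefault) hev
  refine hle.trans ?_
  have := ENNReal.liminf_mul_le (u := u) (v := v) (f := atTop)
    (Or.inr hL) (Or.inl (by rw [hlimsup]; exact ENNReal.ofReal_ne_top))
  rwa [hlimsup] at this

lemma main_lemma {N : ℕ} {Ω : Set (Euc N)} (hΩ : IsOpen Ω) {t : ℝ} (ht0 : 0 < t)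
    {f : Euc N → ℝ} (hf : Measurable f) (hint : IntegrableOn f Ω volume)
    (hL : Filter.liminf (fun q : ℝ => gagliardoSemi Ω t q f) atTop ≠ ⊤) :
    ∃ v : Euc N → ℝ, (∀ᵐ x ∂(volume.restrict Ω), f x = v x) ∧
      holderSemi Ω t v ≤ Filter.liminf (fun q : ℝ => gagliardoSemi Ω t q f) atTop := by
  set L := Filter.liminf (fun q : ℝ => gagliardoSemi Ω t q f) atTop with hLdef
  set Lr := L.toReal with hLrdef
  have hLr0 : 0 ≤ Lr := ENNReal.toReal_nonneg
  have hofLr : ENNReal.ofReal Lr = L := ENNReal.ofReal_toReal hL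
  set A : Euc N → ℝ → ℝ := fun x r => ⨍ z in closedBall x r, f z with hAdef
  -- real-valued key estimate
  have real_est : ∀ x y : Euc N, ∀ r ρ : ℝ, 0 < r → 0 < ρ → closedBall x r ⊆ Ω →
      closedBall y ρ ⊆ Ω → |A x r - A y ρ| ≤ (dist x y + r + ρ) ^ t * Lr := by
    intro x y r ρ hr hρ hB1 hB2
    have h := avg_liminf Ω ht0 hf hint hr hρ hB1 hB2 hL
    have h2 := ENNReal.toReal_mono (ENNReal.mul_ne_top ENNReal.ofReal_ne_top hL) h
    rwa [ENNReal.toReal_ofReal (abs_nonneg _), ENNReal.toReal_mul,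
      ENNReal.toReal_ofReal (by positivity)] at h2
  -- radii inside Ω
  have hrad : ∀ x ∈ Ω, ∃ δ > (0:ℝ), closedBall x δ ⊆ Ω := by
    intro x hx
    obtain ⟨ε, hε, hsub⟩ := Metric.isOpen_iff.1 hΩ x hx
    exact ⟨ε/2, by positivity, (closedBall_subset_ball (by linarith)).trans hsub⟩
  -- smallness of the modulus
  have htend0 : Tendsto (fun δ : ℝ => (2*δ) ^ t * Lr) (𝓝[>] (0:ℝ)) (𝓝 0) := by
    have h2δ : Tendsto (fun δ : ℝ => 2*δ) (𝓝[>] (0:ℝ)) (𝓝 0) := by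
      have : Tendsto (fun δ : ℝ => 2*δ) (𝓝 (0:ℝ)) (𝓝 0) := by
        simpa [Pi.mul_def] using (continuous_const.mul continuous_id).tendsto (0:ℝ)
      exact this.mono_left nhdsWithin_le_nhds
    have hrpow : ContinuousAt (fun z : ℝ => z ^ t) 0 :=
      Real.continuousAt_rpow_const 0 t (Or.inr ht0.le)
    have := (hrpow.tendsto.comp h2δ).mul_const Lr
    simpa [Real.zero_rpow ht0.ne'] using this
  -- existence of limits of averages at every point of Ω
  have exists_lim : ∀ x ∈ Ω, ∃ l : ℝ, Tendsto (A x) (𝓝[>] (0:ℝ)) (𝓝 l) := by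
    intro x hx
    obtain ⟨δ0, hδ0, hsub0⟩ := hrad x hx
    have hcauchy : Cauchy (Filter.map (A x) (𝓝[>] (0:ℝ))) := by
      rw [Metric.cauchy_iff]
      refine ⟨Filter.map_neBot, ?_⟩
      intro ε hε
      have hev : ∀ᶠ δ in 𝓝[>] (0:ℝ), ((2*δ) ^ t * Lr < ε ∧ δ ≤ δ0) ∧ 0 < δ := by
        refine (Filter.Eventually.and ?_ ?_).and self_mem_nhdsWithin
        · exact htend0.eventually_lt_const hε
        · exact Filter.Eventually.mono (Ioo_mem_nhdsGT_of_mem ⟨le_refl 0, hδ0⟩) fun δ hδ => hδ.2.le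
      obtain ⟨s, hs_mem, hs⟩ := Filter.eventually_iff_exists_mem.1 hev
      refine ⟨A x '' s, image_mem_map hs_mem, ?_⟩
      rintro _ ⟨r, hrs, rfl⟩ _ ⟨ρ, hρs, rfl⟩
      obtain ⟨⟨h1r, h2r⟩, h3r⟩ := hs r hrs
      obtain ⟨⟨h1ρ, h2ρ⟩, h3ρ⟩ := hs ρ hρs
      rw [Real.dist_eq]
      have base : |A x r - A x ρ| ≤ (r + ρ) ^ t * Lr := by
        have := real_est x x r ρ h3r h3ρ
          ((closedBall_subset_closedBall h2r).trans hsub0)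
          ((closedBall_subset_closedBall h2ρ).trans hsub0)
        simpa using this
      have hmax : (r + ρ) ^ t * Lr ≤ (2 * max r ρ) ^ t * Lr := by
        refine mul_le_mul_of_nonneg_right (Real.rpow_le_rpow (by positivity) ?_ ht0.le) hLr0
        rcases le_total r ρ with h | h
        · rw [max_eq_right h]; linarith
        · rw [max_eq_left h]; linarith
      have hlt : (2 * max r ρ) ^ t * Lr < ε := by
        rcases max_cases r ρ with ⟨hm, _⟩ | ⟨hm, _⟩ <;> rw [hm]
        · exact h1r
        · exact h1ρ
      exact lt_of_le_of_lt (base.trans hmax) hlt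
    obtain ⟨l, hl⟩ := CompleteSpace.complete hcauchy
    exact ⟨l, hl⟩
  classical
  set v : Euc N → ℝ := fun x =>
    if h : ∃ l : ℝ, Tendsto (A x) (𝓝[>] (0:ℝ)) (𝓝 l) then h.choose else 0 with hvdef
  have hv : ∀ x ∈ Ω, Tendsto (A x) (𝓝[>] (0:ℝ)) (𝓝 (v x)) := by
    intro x hx
    have h := exists_lim x hx
    simp only [hvdef, dif_pos h]
    exact h.choose_spec
  -- a.e. equality
  have hg : Integrable (Ω.indicator f) volume :=
    hint.integrable_indicator hΩ.measurableSet
  have hae : ∀ᵐ x ∂(volume : Measure (Euc N)),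
      Tendsto (fun r => ⨍ z in closedBall x r, Ω.indicator f z) (𝓝[>] (0:ℝ))
        (𝓝 (Ω.indicator f x)) := by
    filter_upwards [(Besicovitch.vitaliFamily (volume : Measure (Euc N))).ae_tendsto_average
      hg.locallyIntegrable] with x hx
    exact hx.comp (Besicovitch.tendsto_filterAt _ _)
  have haeΩ : ∀ᵐ x ∂(volume.restrict Ω), f x = v x := by
    filter_upwards [ae_restrict_of_ae hae, ae_restrict_mem hΩ.measurableSet] with x hx hxΩ
    obtain ⟨δ0, hδ0, hsub0⟩ := hrad x hxΩ
    have heq : ∀ᶠ r in 𝓝[>] (0:ℝ), (⨍ z in closedBall x r, Ω.indicator f z) = A x r := by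
      filter_upwards [Ioo_mem_nhdsGT_of_mem ⟨le_refl 0, hδ0⟩] with r hr
      refine average_congr ?_
      refine (ae_restrict_iff' measurableSet_closedBall).2 (ae_of_all _ fun z hz => ?_)
      exact indicator_of_mem ((closedBall_subset_closedBall hr.2.le).trans hsub0 hz) f
    have hx' : Tendsto (A x) (𝓝[>] (0:ℝ)) (𝓝 (Ω.indicator f x)) := hx.congr' heq
    have huniq := tendsto_nhds_unique hx' (hv x hxΩ)
    rw [indicator_of_mem hxΩ] at huniq
    exact huniq
  refine ⟨v, haeΩ, ?_⟩
  rw [holderSemi]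
  refine iSup_le fun x => iSup_le fun y => iSup_le fun hne => ?_
  have hd : 0 < ‖x.1 - y.1‖ := by
    rw [norm_pos_iff]
    exact sub_ne_zero.2 hne
  obtain ⟨δx, hδx, hsubx⟩ := hrad x.1 x.2
  obtain ⟨δy, hδy, hsuby⟩ := hrad y.1 y.2
  have hvd : |v x.1 - v y.1| ≤ dist x.1 y.1 ^ t * Lr := by
    have h1 : Tendsto (fun r => |A x.1 r - A y.1 r|) (𝓝[>] (0:ℝ))
        (𝓝 |v x.1 - v y.1|) := ((hv x.1 x.2).sub (hv y.1 y.2)).abs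
    have h2 : Tendsto (fun r : ℝ => (dist x.1 y.1 + r + r) ^ t * Lr) (𝓝[>] (0:ℝ))
        (𝓝 (dist x.1 y.1 ^ t * Lr)) := by
      have hi : Tendsto (fun r : ℝ => dist x.1 y.1 + r + r) (𝓝[>] (0:ℝ))
          (𝓝 (dist x.1 y.1)) := by
        have : Tendsto (fun r : ℝ => dist x.1 y.1 + r + r) (𝓝 (0:ℝ))
            (𝓝 (dist x.1 y.1 + 0 + 0)) := by
          exact ((continuous_const.add continuous_id).add continuous_id).tendsto 0
        simpa using this.mono_left nhdsWithin_le_nhds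
      have hdist0 : dist x.1 y.1 ≠ 0 := by
        rw [dist_eq_norm]; exact hd.ne'
      have hrpow : ContinuousAt (fun z : ℝ => z ^ t) (dist x.1 y.1) :=
        Real.continuousAt_rpow_const _ t (Or.inl hdist0)
      exact (hrpow.tendsto.comp hi).mul_const Lr
    refine le_of_tendsto_of_tendsto h1 h2 ?_
    filter_upwards [Ioo_mem_nhdsGT_of_mem (α := ℝ) ⟨le_refl 0, lt_min hδx hδy⟩] with r hr
    exact real_est x.1 y.1 r r hr.1 hr.1
      ((closedBall_subset_closedBall (hr.2.le.trans (min_le_left _ _))).trans hsubx)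
      ((closedBall_subset_closedBall (hr.2.le.trans (min_le_right _ _))).trans hsuby)
  calc ENNReal.ofReal (|v x.1 - v y.1| / ‖x.1 - y.1‖ ^ t) ≤ ENNReal.ofReal Lr := by
        apply ENNReal.ofReal_le_ofReal
        rw [div_le_iff₀ (Real.rpow_pos_of_pos hd t)]
        calc |v x.1 - v y.1| ≤ dist x.1 y.1 ^ t * Lr := hvd
          _ = Lr * ‖x.1 - y.1‖ ^ t := by rw [dist_eq_norm, mul_comm]
    _ = L := hofLr

end Aux

/-- If the Gagliardo seminorms `[u]_{W^{t,q}(Ω)}` have finite liminf as `q → ∞`,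
then `u` has a representative with Hölder seminorm bounded by that liminf. -/
theorem stmt_4 {N : ℕ} (Ω : Set (Euc N)) (hΩ : IsOpen Ω) (t : ℝ)
    (ht0 : 0 < t) (ht1 : t < 1) (u : Euc N → ℝ)
    (hmem : ∀ q : ℝ, 1 ≤ q → MemLp u (ENNReal.ofReal q) (volume.restrict Ω))
    (hfin : ∀ q : ℝ, 1 ≤ q → gagliardoP Ω t q u ≠ ⊤)
    (hL : Filter.liminf (fun q : ℝ => gagliardoSemi Ω t q u) atTop ≠ ⊤) :
    ∃ v : Euc N → ℝ, (∀ᵐ x ∂(volume.restrict Ω), u x = v x) ∧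
      holderSemi Ω t v ≤ Filter.liminf (fun q : ℝ => gagliardoSemi Ω t q u) atTop := by
  have h1 : MemLp u 1 (volume.restrict Ω) := by
    have := hmem 1 le_rfl
    rwa [ENNReal.ofReal_one] at this
  have hasm : AEStronglyMeasurable u (volume.restrict Ω) := h1.1
  set f := hasm.mk u with hfdef
  have hff : u =ᵐ[volume.restrict Ω] f := hasm.ae_eq_mk
  have hfmeas : Measurable f := hasm.stronglyMeasurable_mk.measurable
  have hintf : IntegrableOn f Ω volume := (memLp_one_iff_integrable.1 h1).congr hff
  have hgag : ∀ q : ℝ, gagliardoP Ω t q u = gagliardoP Ω t q f := by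
    intro q
    rw [gagliardoP, gagliardoP]
    refine lintegral_congr_ae ?_
    filter_upwards [hff] with x hx
    refine lintegral_congr_ae ?_
    filter_upwards [hff] with y hy
    rw [hx, hy]
  have hsemi : (fun q : ℝ => gagliardoSemi Ω t q u) = fun q => gagliardoSemi Ω t q f := by
    funext q
    rw [gagliardoSemi, gagliardoSemi, hgag]
  rw [hsemi] at hL ⊢
  obtain ⟨v, hv1, hv2⟩ := main_lemma hΩ ht0 hfmeas hintf hL
  refine ⟨v, ?_, hv2⟩
  filter_upwards [hff, hv1] with x hx1 hx2
  rw [hx1, hx2]
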